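/- Let V be a finitely generated FI-module with generating degree gd(V). Then gd(DV) = gd(V) − 1 if gd(V) ≥ 1, and DV = 0 if gd(V) ≤ 0 (i.e., V is generated in degree 0 or V = 0). -/

import Mathlib

open CategoryTheory CategoryTheory.Limits

def FI : Type := ℕ
def FI.of : ℕ → FI := id
def FI.n : FI → ℕ := id
instance : Category FI where
  Hom m n := Fin m.n ↪ Fin n.n
  id _ := Function.Embedding.refl _
  comp f g := f.trans g
  id_comp _ := rfl
  comp_id _ := rfl
  assoc _ _ _ := rfl
abbrev FIMod (k : Type) [CommRing k] := FI ⥤ ModuleCat.{0} k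

/-- Extension of an injection `[m] → [n]` to `[m+1] → [n+1]` fixing the new first point. -/
def extEmb {m n : ℕ} (f : Fin m ↪ Fin n) : Fin (m + 1) ↪ Fin (n + 1) :=
  ⟨fun x => Fin.cases 0 (fun r => (f r).succ) x, by
    intro a b h
    induction a using Fin.cases with
    | zero =>
      induction b using Fin.cases with
      | zero => rfl
      | succ j => simp at h; exact absurd h.symm (Fin.succ_ne_zero _)
    | succ i =>
      induction b using Fin.cases with
      | zero => simp at h <;> exact absurd h (Fin.succ_ne_zero _)
      | succ j =>
        simp only [Fin.cases_succ] at h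
        exact congrArg Fin.succ (f.injective (Fin.succ_injective _ h))⟩

@[simp] lemma extEmb_zero {m n : ℕ} (f : Fin m ↪ Fin n) : extEmb f 0 = 0 := rfl
@[simp] lemma extEmb_succ {m n : ℕ} (f : Fin m ↪ Fin n) (r : Fin m) :
    extEmb f r.succ = (f r).succ := by simp [extEmb] <;> rfl

/-- Extensionality for morphisms in `FI`. -/
lemma FI.hom_ext {m n : FI} {f g : Fin m.n ↪ Fin n.n} (h : ∀ x, f x = g x) :
    f = g := DFunLike.ext f g h

/-- The self-embedding `ι : FI → FI`, `[n] ↦ [n+1]`. -/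
def iota : FI ⥤ FI where
  obj n := FI.of (n.n + 1)
  map f := extEmb f
  map_id n := by
    refine FI.hom_ext fun x => ?_
    induction x using Fin.cases <;> rfl
  map_comp {a b c} f g := by
    refine FI.hom_ext fun x => ?_
    induction x using Fin.cases with
    | zero => rfl
    | succ i =>
      show extEmb (f.trans g) i.succ = extEmb g (extEmb f i.succ)
      simp

variable (k : Type) [CommRing k]

/-- The shift functor `Σ` on `FI`-modules. -/
def shiftF : FIMod k ⥤ FIMod k := (Functor.whiskeringLeft FI FI (ModuleCat k)).obj iota

/-- The natural transformation `Id → ι` given by the inclusions `[n] ↪ [n+1]`, `r ↦ r+1`. -/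
def piTrans : 𝟭 FI ⟶ iota where
  app n := ⟨Fin.succ, Fin.succ_injective _⟩
  naturality m n f := by
    refine FI.hom_ext fun x => ?_
    simp [iota, extEmb, CategoryStruct.comp, CategoryStruct.id] <;> rfl

/-- The natural map `V → ΣV`. -/
def toShift (V : FIMod k) : V ⟶ (shiftF k).obj V :=
  V.leftUnitor.inv ≫ Functor.whiskerRight piTrans V

/-- `V → ΣV` as a natural transformation of endofunctors. -/
def natToShift : 𝟭 (FIMod k) ⟶ shiftF k where
  app V := toShift k V
  naturality V W φ := by
    ext n
    simp only [Functor.id_obj, Functor.id_map, toShift, shiftF, Functor.whiskeringLeft_obj_obj,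
      Functor.comp_obj, Category.assoc, NatTrans.comp_app, Functor.leftUnitor_inv_app,
      Functor.whiskerRight_app, Functor.whiskeringLeft_obj_map, Functor.whiskerLeft_app, Category.id_comp]
    first
      | exact (φ.naturality (piTrans.app n)).symm
      | exact congrArg (fun h => ModuleCat.Hom.hom h _) (φ.naturality (piTrans.app n)).symm

/-- The derivative `DV`, the cokernel of `V → ΣV`. -/
noncomputable def Dobj (V : FIMod k) : FIMod k := cokernel (toShift k V)

/-- The derivative functor `D`. -/
noncomputable def Dfun : FIMod k ⥤ FIMod k where
  obj V := Dobj k V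
  map {V W} φ := cokernel.map _ _ φ ((shiftF k).map φ) ((natToShift k).naturality φ).symm
  map_id V := by
    apply coequalizer.hom_ext
    simp [Dobj]
  map_comp {U V W} φ ψ := by
    apply coequalizer.hom_ext
    simp [Dobj]

variable (k : Type) [CommRing k]

/-- An `FI`-submodule of an `FI`-module. -/
structure FISub {k : Type} [CommRing k] (V : FIMod k) where
  sub : ∀ n : FI, Submodule k (V.obj n)
  map_mem : ∀ {m n : FI} (f : m ⟶ n) (v : V.obj m), v ∈ sub m → (V.map f) v ∈ sub n

/-- `V` is generated in degrees `≤ N`. -/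
def GeneratedIn {k : Type} [CommRing k] (V : FIMod k) (N : ℕ) : Prop :=
  ∀ W : FISub V, (∀ i : ℕ, i ≤ N → ∀ v : V.obj (FI.of i), v ∈ W.sub (FI.of i)) →
    ∀ (n : FI) (v : V.obj n), v ∈ W.sub n

/-- `V` is a finitely generated `FI`-module. -/
def FG {k : Type} [CommRing k] (V : FIMod k) : Prop :=
  ∃ S : Finset ((n : ℕ) × V.obj (FI.of n)),
    ∀ W : FISub V, (∀ s ∈ S, s.2 ∈ W.sub (FI.of s.1)) → ∀ (n : FI) (v : V.obj n), v ∈ W.sub n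

/-- `V` is torsionless: no nonzero element is killed by an injection. -/
def Torsionless {k : Type} [CommRing k] (V : FIMod k) : Prop :=
  ∀ (i : ℕ) (v : V.obj (FI.of i)), v ≠ 0 →
    ∀ α : FI.of i ⟶ FI.of (i + 1), (V.map α) v ≠ 0


instance (k : Type) [CommRing k] : HasFiniteBiproducts (FIMod k) :=
  Abelian.hasFiniteBiproducts

variable (k : Type) [CommRing k]

/-- The free (representable) `FI`-module `M(i)`, the linearization of `FI(i,−)`. -/
noncomputable def Mrep (i : ℕ) : FIMod k where
  obj n := ModuleCat.of k ((Fin i ↪ Fin n.n) →₀ k)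
  map {m n} f := ModuleCat.ofHom (Finsupp.lmapDomain k k fun e : Fin i ↪ Fin m.n => e.trans f)
  map_id n := by
    have : (fun e : Fin i ↪ Fin n.n => e.trans (𝟙 n)) = id := by
      funext e; ext x; rfl
    show ModuleCat.ofHom (Finsupp.lmapDomain k k _) = _
    rw [this, Finsupp.lmapDomain_id]
    rfl
  map_comp {a b c} f g := by
    show ModuleCat.ofHom (Finsupp.lmapDomain k k _) = _
    have : (fun e : Fin i ↪ Fin a.n => e.trans (f ≫ g))
        = (fun e : Fin i ↪ Fin b.n => e.trans g) ∘ (fun e => e.trans f) := by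
      funext e; ext x; rfl
    rw [this, Finsupp.lmapDomain_comp]
    rfl

lemma FI.le_of_hom {m n : FI} (f : m ⟶ n) : m.n ≤ n.n := by
  simpa using Fintype.card_le_of_embedding (f : Fin m.n ↪ Fin n.n)

/-- The submodule `(JV)_n ⊆ V_n` spanned by images from strictly lower degrees. -/
def Jsub {k : Type} [CommRing k] (V : FIMod k) (n : FI) : Submodule k (V.obj n) :=
  ⨆ (m : FI) (_ : m.n < n.n) (f : m ⟶ n), LinearMap.range (V.map f).hom

lemma Jsub_le_comap {k : Type} [CommRing k] (V : FIMod k) {m n : FI} (f : m ⟶ n) :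
    Jsub V m ≤ (Jsub V n).comap (V.map f).hom := by
  refine iSup_le fun m' => iSup_le fun hm' => iSup_le fun g => ?_
  rintro x ⟨y, rfl⟩
  simp only [Submodule.mem_comap]
  have h1 : (V.map f).hom ((V.map g).hom y) = (V.map (g ≫ f)).hom y := by
    rw [V.map_comp]; rfl
  rw [h1]
  have h2 : m'.n < n.n := lt_of_lt_of_le hm' (FI.le_of_hom f)
  refine Submodule.mem_iSup_of_mem m' ?_
  refine Submodule.mem_iSup_of_mem h2 ?_
  exact Submodule.mem_iSup_of_mem (g ≫ f) ⟨y, rfl⟩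

/-- The degreewise quotient `H₀(V) = V/JV` as an `FI`-module. -/
noncomputable def H0obj {k : Type} [CommRing k] (V : FIMod k) : FIMod k where
  obj n := ModuleCat.of k (V.obj n ⧸ Jsub V n)
  map {m n} f := ModuleCat.ofHom (Submodule.mapQ _ _ (V.map f).hom (Jsub_le_comap V f))
  map_id n := by
    have h : V.map (𝟙 n) = 𝟙 (V.obj n) := V.map_id n
    apply ModuleCat.hom_ext
    refine Submodule.linearMap_qext _ ?_
    ext x
    show Submodule.Quotient.mk ((V.map (𝟙 n)).hom x) = _
    rw [h]
    rfl
  map_comp {a b c} f g := by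
    have h : V.map (f ≫ g) = V.map f ≫ V.map g := V.map_comp f g
    apply ModuleCat.hom_ext
    refine Submodule.linearMap_qext _ ?_
    ext x
    show Submodule.Quotient.mk ((V.map (f ≫ g)).hom x) = _
    rw [h]
    rfl

/-- The functor `H₀ = ℂ̃₀ ⊗_{ℂ̃} − : FI-Mod → FI-Mod`. -/
noncomputable def H0Functor (k : Type) [CommRing k] : FIMod k ⥤ FIMod k where
  obj := H0obj
  map {V W} φ :=
    { app := fun n => ModuleCat.ofHom (Submodule.mapQ _ _ (φ.app n).hom (by
        refine iSup_le fun m => iSup_le fun hm => iSup_le fun g => ?_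
        rintro x ⟨y, rfl⟩
        simp only [Submodule.mem_comap]
        have h1 : (φ.app n).hom ((V.map g).hom y) = (W.map g).hom ((φ.app m).hom y) :=
          congrArg (fun h => ModuleCat.Hom.hom h y) (φ.naturality g)
        rw [h1]
        refine Submodule.mem_iSup_of_mem m (Submodule.mem_iSup_of_mem hm ?_)
        exact Submodule.mem_iSup_of_mem g ⟨_, rfl⟩)),
      naturality := by
        intro m n f
        apply ModuleCat.hom_ext
        refine Submodule.linearMap_qext _ ?_
        ext x
        have h : (φ.app n).hom ((V.map f).hom x) = (W.map f).hom ((φ.app m).hom x) :=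
          congrArg (fun h => ModuleCat.Hom.hom h x) (φ.naturality f)
        show Submodule.Quotient.mk ((φ.app n).hom ((V.map f).hom x)) = _
        rw [h]
        rfl }
  map_id V := by
    ext n : 2
    apply ModuleCat.hom_ext
    refine Submodule.linearMap_qext _ ?_
    ext x
    rfl
  map_comp {U V W} φ ψ := by
    ext n : 2
    apply ModuleCat.hom_ext
    refine Submodule.linearMap_qext _ ?_
    ext x
    rfl

instance (k : Type) [CommRing k] : (H0Functor k).Additive where
  map_add := by
    intro V W φ ψ
    ext n : 2
    apply ModuleCat.hom_ext
    refine Submodule.linearMap_qext _ ?_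
    ext x
    show Submodule.Quotient.mk ((φ.app n).hom x + (ψ.app n).hom x) =
      (((H0Functor k).map φ).app n).hom (Submodule.Quotient.mk x) +
      (((H0Functor k).map ψ).app n).hom (Submodule.Quotient.mk x)
    rw [Submodule.Quotient.mk_add]
    rfl

/-- The homology functor `H_s(−) = Tor_s^{ℂ̃}(ℂ̃₀, −)`, as the `s`-th left derived
functor of `H₀`. -/
noncomputable def Hs (k : Type) [CommRing k] [EnoughProjectives (FIMod k)] (s : ℕ) :
    FIMod k ⥤ FIMod k :=
  (H0Functor k).leftDerived s

/-- Strictly monotone injections `[i] → [n]`, a set of representatives for the orbits of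
the right action of `S_i` on `FI(i,n)`. -/
def OrdInj (i n : ℕ) : Type := {e : Fin i ↪ Fin n // StrictMono e}

noncomputable instance (i n : ℕ) : Fintype (OrdInj i n) := by
  classical
  unfold OrdInj
  infer_instance

/-- The canonical map `⊕_{e ∈ OrdInj(i,n)} V_i → V_n`, `(v_e) ↦ Σ_e e·v_e`.
It is bijective for every `n` exactly when `V` is the induced module
`ℂ̃ ⊗_{k[S_i]} V_i`. -/
noncomputable def basicMap {k : Type} [CommRing k] (V : FIMod k) (i n : ℕ) :
    (OrdInj i n → V.obj (FI.of i)) →ₗ[k] V.obj (FI.of n) :=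
  ∑ e : OrdInj i n, (V.map (e.1 : FI.of i ⟶ FI.of n)).hom.comp (LinearMap.proj e)

/-- `V` is (isomorphic to) a basic `♯`-filtered module `ℂ̃ ⊗_{k[S_i]} T` with `T = V_i`. -/
def BasicSharp {k : Type} [CommRing k] (V : FIMod k) (i : ℕ) : Prop :=
  (∀ j : ℕ, j < i → Subsingleton (V.obj (FI.of j))) ∧
    ∀ n : ℕ, Function.Bijective (basicMap V i n)

/-- `V` admits a filtration of length `m` whose successive quotients are basic
`♯`-filtered modules. -/
def SharpChain {k : Type} [CommRing k] : ℕ → FIMod k → Prop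
  | 0, V => IsZero V
  | m + 1, V => ∃ (U W : FIMod k) (f : U ⟶ V) (g : V ⟶ W) (w : f ≫ g = 0),
      (ShortComplex.mk f g w).ShortExact ∧ SharpChain m U ∧ ∃ i, BasicSharp W i

/-- `V` is a `♯`-filtered `FI`-module. -/
def SharpFiltered {k : Type} [CommRing k] (V : FIMod k) : Prop :=
  ∃ m, SharpChain m V

/-- `pdLE n M` : `M` has projective dimension `≤ n`. -/
noncomputable def pdLE {C : Type*} [Category C] [Abelian C] : ℕ → C → Prop
  | 0, M => Projective M
  | n + 1, M => ∃ (P : C) (f : P ⟶ M), Projective P ∧ Epi f ∧ pdLE n (kernel f)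

/-- The `d`-th iterated shift `Σ_d V`. -/
def shiftIter (k : Type) [CommRing k] : ℕ → FIMod k → FIMod k
  | 0, V => V
  | d + 1, V => (shiftF k).obj (shiftIter k d V)

/-- A permutation of `[i]` as a morphism in `FI`. -/
def permHom (i : ℕ) (g : Equiv.Perm (Fin i)) : FI.of i ⟶ FI.of i := g.toEmbedding

/-- The representation of the symmetric group `S_i` on `V_i` coming from the
`FI`-module structure. -/
def permRep {k : Type} [CommRing k] (V : FIMod k) (i : ℕ) :
    Representation k (Equiv.Perm (Fin i)) (V.obj (FI.of i)) where
  toFun g := (V.map (permHom i g)).hom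
  map_one' := by
    have h1 : permHom i 1 = 𝟙 (FI.of i) := rfl
    show (V.map (permHom i 1)).hom = (1 : Module.End k (V.obj (FI.of i)))
    rw [h1, V.map_id]; rfl
  map_mul' g h := by
    have h1 : permHom i (g * h) = permHom i h ≫ permHom i g := rfl
    show (V.map (permHom i (g * h))).hom = (V.map (permHom i h) ≫ V.map (permHom i g)).hom
    rw [h1, V.map_comp]


section DerivAux

variable {k : Type} [CommRing k]

/-- View a morphism in `FI` as an embedding. -/
def FI.toEmb {m n : FI} (f : m ⟶ n) : Fin m.n ↪ Fin n.n := f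

/-- View a morphism into `iota.obj j` as an embedding. -/
def FI.toEmb' {j : FI} {i : ℕ} (f : FI.of i ⟶ iota.obj j) : Fin i ↪ Fin (j.n + 1) := f

/-- View an embedding as a morphism in `FI`. -/
def FI.homOf {m n : ℕ} (e : Fin m ↪ Fin n) : FI.of m ⟶ FI.of n := e

lemma toShift_app (V : FIMod k) (n : FI) :
    (toShift k V).app n = V.map (piTrans.app n) := by
  show 𝟙 _ ≫ V.map (piTrans.app n) = _
  exact Category.id_comp _

/-- The pointwise comparison of the cokernel with the cokernel of the component. -/
noncomputable def DIso (V : FIMod k) (j : FI) :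
    (Dobj k V).obj j ≅ cokernel ((toShift k V).app j) :=
  PreservesCokernel.iso ((evaluation FI (ModuleCat.{0} k)).obj j) (toShift k V)

lemma pi_app_eq (V : FIMod k) (j : FI) :
    (cokernel.π (toShift k V)).app j =
      cokernel.π ((toShift k V).app j) ≫ (DIso V j).inv := by
  rw [DIso, PreservesCokernel.iso_inv]
  exact (π_comp_cokernelComparison (toShift k V)
    ((evaluation FI (ModuleCat.{0} k)).obj j)).symm

lemma pi_app_surjective (V : FIMod k) (j : FI) :
    Function.Surjective ((cokernel.π (toShift k V)).app j) :=
  (ModuleCat.epi_iff_surjective _).mp inferInstance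

lemma pi_app_zero_iff (V : FIMod k) (j : FI) (v : V.obj (iota.obj j)) :
    (cokernel.π (toShift k V)).app j v = 0 ↔
      v ∈ LinearMap.range ((toShift k V).app j).hom := by
  have hπ := pi_app_eq V j
  have hinj : Function.Injective ((DIso V j).inv) := by
    intro a b h
    have ha : ((DIso V j).hom) (((DIso V j).inv) a) = a :=
      ConcreteCategory.congr_hom (DIso V j).inv_hom_id a
    have hb : ((DIso V j).hom) (((DIso V j).inv) b) = b :=
      ConcreteCategory.congr_hom (DIso V j).inv_hom_id b
    rw [← ha, ← hb, h]
  constructor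
  · intro h
    have h1 : ((DIso V j).inv) (cokernel.π ((toShift k V).app j) v) = 0 := by
      rw [hπ] at h; exact h
    have h2 : cokernel.π ((toShift k V).app j) v = 0 := by
      apply hinj; rw [h1, map_zero]
    have h4 : ((ModuleCat.cokernelIsoRangeQuotient ((toShift k V).app j)).hom)
        ((cokernel.π ((toShift k V).app j)) v) =
        (LinearMap.range ((toShift k V).app j).hom).mkQ v :=
      ConcreteCategory.congr_hom
        (ModuleCat.cokernel_π_cokernelIsoRangeQuotient_hom ((toShift k V).app j)) v
    rw [h2, map_zero] at h4
    have h5 : Submodule.Quotient.mk v =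
        (0 : _ ⧸ LinearMap.range ((toShift k V).app j).hom) := h4.symm
    exact (Submodule.Quotient.mk_eq_zero _).mp h5
  · rintro ⟨x, rfl⟩
    rw [hπ]
    show ((DIso V j).inv)
      (cokernel.π ((toShift k V).app j) (((toShift k V).app j) x)) = 0
    have hc : cokernel.π ((toShift k V).app j) (((toShift k V).app j) x) = 0 :=
      ConcreteCategory.congr_hom (cokernel.condition ((toShift k V).app j)) x
    rw [hc, map_zero]

lemma pi_naturality (V : FIMod k) {m n : FI} (g : m ⟶ n) (v : V.obj (iota.obj m)) :
    (Dobj k V).map g ((cokernel.π (toShift k V)).app m v) =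
      (cokernel.π (toShift k V)).app n (V.map (iota.map g) v) := by
  have h : ((cokernel.π (toShift k V)).app n) ((V.map (iota.map g)) v) =
      ((Dobj k V).map g) (((cokernel.π (toShift k V)).app m) v) :=
    ConcreteCategory.congr_hom ((cokernel.π (toShift k V)).naturality g) v
  exact h.symm

/-- The canonical `FI`-submodule generated by degrees `≤ N`. -/
def genSub (V : FIMod k) (N : ℕ) : FISub V where
  sub m := ⨆ p : Σ' (i : ℕ) (_ : i ≤ N), (FI.of i ⟶ m), LinearMap.range (V.map p.2.2).hom
  map_mem {m n} f v hv := by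
    have hle : (⨆ p : Σ' (i : ℕ) (_ : i ≤ N), (FI.of i ⟶ m),
          LinearMap.range (V.map p.2.2).hom) ≤
        Submodule.comap (V.map f).hom
          (⨆ p : Σ' (i : ℕ) (_ : i ≤ N), (FI.of i ⟶ n),
            LinearMap.range (V.map p.2.2).hom) := by
      refine iSup_le fun p => ?_
      rintro x ⟨y, rfl⟩
      simp only [Submodule.mem_comap]
      have h1 : (V.map f) ((V.map p.2.2) y) = (V.map (p.2.2 ≫ f)) y := by
        rw [V.map_comp]; rfl
      rw [h1]
      exact Submodule.mem_iSup_of_mem ⟨p.1, p.2.1, p.2.2 ≫ f⟩ ⟨y, rfl⟩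
    exact hle hv

lemma genSub_top (V : FIMod k) (N : ℕ) (h : GeneratedIn V N) (m : FI) (v : V.obj m) :
    v ∈ (genSub V N).sub m := by
  refine h (genSub V N) (fun i hi w => ?_) m v
  exact Submodule.mem_iSup_of_mem ⟨i, hi, 𝟙 _⟩ ⟨w, by rw [V.map_id]; rfl⟩

lemma claim1 (V : FIMod k) (n : ℕ) (hn : 1 ≤ n) (hgen : GeneratedIn V n) :
    GeneratedIn (Dobj k V) (n - 1) := by
  intro W hW j w
  obtain ⟨v, rfl⟩ := pi_app_surjective V j w
  have hv : v ∈ (genSub V n).sub (iota.obj j) := genSub_top V n hgen _ v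
  refine Submodule.iSup_induction
    (motive := fun x => (cokernel.π (toShift k V)).app j x ∈ W.sub j) _ hv ?_ ?_ ?_
  · rintro ⟨i, hi, f⟩ x ⟨wgen, rfl⟩
    show (cokernel.π (toShift k V)).app j ((V.map f) wgen) ∈ W.sub j
    by_cases hzero : ∃ r : Fin i, FI.toEmb' f r = 0
    · -- f hits 0: factor through iota
      obtain ⟨r0, hr0⟩ := hzero
      obtain ⟨i', rfl⟩ : ∃ i', i = i' + 1 :=
        ⟨i - 1, by
          have : i ≠ 0 := fun h => by subst h; exact r0.elim0
          omega⟩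
      set F : Fin (i' + 1) ↪ Fin (j.n + 1) := FI.toEmb' f with hFdef
      set τE : Fin (i' + 1) ↪ Fin (i' + 1) := (Equiv.swap 0 r0).toEmbedding with hτE
      set F' : Fin (i' + 1) ↪ Fin (j.n + 1) := τE.trans F with hF'
      have hF'0 : F' 0 = 0 := by
        show F ((Equiv.swap 0 r0) 0) = 0
        rw [Equiv.swap_apply_left]; exact hr0
      have hne : ∀ r : Fin i', F' r.succ ≠ 0 := by
        intro r h
        exact Fin.succ_ne_zero r (F'.injective (h.trans hF'0.symm))
      set g : Fin i' ↪ Fin j.n :=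
        ⟨fun r => (F' r.succ).pred (hne r), by
          intro a b h
          have h2 : F' a.succ = F' b.succ := by
            rw [← Fin.succ_pred (F' a.succ) (hne a), ← Fin.succ_pred (F' b.succ) (hne b)]
            exact congrArg Fin.succ h
          exact Fin.succ_injective _ (F'.injective h2)⟩ with hg
      have hgE : extEmb g = F' := by
        refine DFunLike.ext _ _ fun x => ?_
        induction x using Fin.cases with
        | zero => rw [extEmb_zero, hF'0]
        | succ r =>
          rw [extEmb_succ]
          show ((F' r.succ).pred (hne r)).succ = F' r.succ
          exact Fin.succ_pred _ _
      have hE : F = τE.trans (extEmb g) := by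
        rw [hgE]
        refine DFunLike.ext _ _ fun x => ?_
        show F x = F ((Equiv.swap 0 r0) ((Equiv.swap 0 r0) x))
        rw [Equiv.swap_apply_self]
      have hcomp : f = (show FI.of (i' + 1) ⟶ FI.of (i' + 1) from τE) ≫
          iota.map (show FI.of i' ⟶ j from g) := hE
      have h1 : (V.map f) wgen =
          (V.map (iota.map (show FI.of i' ⟶ j from g)))
            ((V.map (show FI.of (i' + 1) ⟶ FI.of (i' + 1) from τE)) wgen) := by
        rw [hcomp]; exact ConcreteCategory.congr_hom (V.map_comp _ _) wgen
      rw [h1]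
      refine (congrArg (· ∈ W.sub j) (pi_naturality V (show FI.of i' ⟶ j from g) _)).mp ?_
      exact W.map_mem (show FI.of i' ⟶ j from g) _ (hW i' (by omega) _)
    · -- f misses 0: the element dies in the cokernel
      have hne : ∀ r : Fin i, FI.toEmb' f r ≠ 0 := fun r h => hzero ⟨r, h⟩
      set F : Fin i ↪ Fin (j.n + 1) := FI.toEmb' f with hFdef
      set g : Fin i ↪ Fin j.n :=
        ⟨fun r => (F r).pred (hne r), by
          intro a b h
          have h2 : F a = F b := by
            rw [← Fin.succ_pred (F a) (hne a), ← Fin.succ_pred (F b) (hne b)]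
            exact congrArg Fin.succ h
          exact F.injective h2⟩ with hg
      have hE : F = g.trans ⟨Fin.succ, Fin.succ_injective _⟩ := by
        refine DFunLike.ext _ _ fun x => ?_
        show F x = ((F x).pred (hne x)).succ
        exact (Fin.succ_pred _ _).symm
      have hcomp : f = (show FI.of i ⟶ j from g) ≫ piTrans.app j := hE
      have h1 : (V.map f) wgen =
          ((toShift k V).app j) ((V.map (show FI.of i ⟶ j from g)) wgen) := by
        rw [toShift_app, hcomp, V.map_comp]; rfl
      rw [h1]
      rw [(pi_app_zero_iff V j _).mpr ⟨_, rfl⟩]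
      exact zero_mem _
  · show (cokernel.π (toShift k V)).app j 0 ∈ W.sub j
    rw [map_zero]; exact zero_mem _
  · intro x y hx hy
    show (cokernel.π (toShift k V)).app j (x + y) ∈ W.sub j
    rw [map_add]
    exact add_mem hx hy

lemma claim3 (V : FIMod k) (m : ℕ) (hD : GeneratedIn (Dobj k V) m) :
    GeneratedIn V (m + 1) := by
  intro U hU
  let W : FISub (Dobj k V) :=
    { sub := fun j => Submodule.map (show V.obj (iota.obj j) →ₗ[k] (Dobj k V).obj j from
          ((cokernel.π (toShift k V)).app j).hom) (U.sub (iota.obj j))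
      map_mem := by
        intro a b g w hw
        obtain ⟨v, hv, rfl⟩ := hw
        exact ⟨_, U.map_mem (iota.map g) v hv, (pi_naturality V g v).symm⟩ }
  have hWsub : ∀ (j : FI) (w : (Dobj k V).obj j), w ∈ W.sub j := by
    refine hD W (fun i hi w => ?_)
    obtain ⟨v, rfl⟩ := pi_app_surjective V (FI.of i) w
    exact ⟨v, hU (i + 1) (by omega) v, rfl⟩
  have key : ∀ (jn : ℕ) (v : V.obj (FI.of jn)), v ∈ U.sub (FI.of jn) := by
    intro jn
    induction jn with
    | zero => exact fun v => hU 0 (by omega) v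
    | succ t ih =>
      intro v
      let v' : ↑(V.obj (iota.obj (FI.of t))) := v
      obtain ⟨u, hu, huv⟩ := hWsub (FI.of t) ((cokernel.π (toShift k V)).app (FI.of t) v')
      have hsub : (cokernel.π (toShift k V)).app (FI.of t) (v' - u) = 0 := by
        refine (map_sub (ConcreteCategory.hom ((cokernel.π (toShift k V)).app (FI.of t))) v' u).trans
          (sub_eq_zero.mpr ?_)
        exact huv.symm
      obtain ⟨x, hx⟩ := (pi_app_zero_iff V (FI.of t) (v' - u)).mp hsub
      have hx' : (V.map (piTrans.app (FI.of t))) x = v' - u := by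
        rw [← toShift_app]
        exact hx
      have hxv : v' = u + (V.map (piTrans.app (FI.of t))) x := by rw [hx']; abel
      show v' ∈ U.sub (iota.obj (FI.of t))
      rw [hxv]
      exact add_mem hu (U.map_mem (piTrans.app (FI.of t)) x (ih x))
  exact fun j v => key j.n v

lemma claim4 (V : FIMod k) (hz : IsZero (Dobj k V)) : GeneratedIn V 0 := by
  have hobj : ∀ (j : FI) (w : (Dobj k V).obj j), w = 0 := by
    intro j w
    have h := (Functor.isZero_iff (Dobj k V)).mp hz j
    have h0 : (𝟙 ((Dobj k V).obj j)) = (0 : (Dobj k V).obj j ⟶ (Dobj k V).obj j) :=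
      h.eq_of_src _ _
    calc w = (𝟙 ((Dobj k V).obj j) : (Dobj k V).obj j ⟶ (Dobj k V).obj j) w := rfl
      _ = (0 : (Dobj k V).obj j ⟶ (Dobj k V).obj j) w := by rw [h0]
      _ = 0 := rfl
  have hsurj : ∀ (j : FI) (v : V.obj (iota.obj j)),
      v ∈ LinearMap.range ((toShift k V).app j).hom :=
    fun j v => (pi_app_zero_iff V j v).mp (hobj j _)
  intro U hU j v
  have key : ∀ (jn : ℕ) (v : V.obj (FI.of jn)), v ∈ U.sub (FI.of jn) := by
    intro jn
    induction jn with
    | zero => exact fun v => hU 0 le_rfl v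
    | succ t ih =>
      intro v
      obtain ⟨x, hx⟩ := hsurj (FI.of t) v
      rw [← hx, toShift_app]
      exact U.map_mem (piTrans.app (FI.of t)) x (ih x)
  exact key j.n v

/-- The unique morphism from `[0]`. -/
def emb0 (m : FI) : FI.of 0 ⟶ m := ⟨fun x => x.elim0, fun a => a.elim0⟩

lemma claim5 (V : FIMod k) (h0 : GeneratedIn V 0) : IsZero (Dobj k V) := by
  let W : FISub V :=
    { sub := fun m => LinearMap.range (V.map (emb0 m)).hom
      map_mem := by
        intro a b g v hv
        obtain ⟨y, rfl⟩ := hv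
        have h1 : (V.map g) ((V.map (emb0 a)) y) = (V.map (emb0 a ≫ g)) y := by
          rw [V.map_comp]; rfl
        have h2 : emb0 a ≫ g = emb0 b := FI.hom_ext fun x => x.elim0
        rw [h1, h2]
        exact ⟨y, rfl⟩ }
  have hall : ∀ (m : FI) (v : V.obj m), v ∈ LinearMap.range (V.map (emb0 m)).hom := by
    refine h0 W (fun i hi v => ?_)
    interval_cases i
    have h2 : emb0 (FI.of 0) = 𝟙 (FI.of 0) := FI.hom_ext fun x => x.elim0
    exact ⟨v, by rw [h2, V.map_id]; rfl⟩
  have hsurj : ∀ (j : FI) (v : V.obj (iota.obj j)),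
      v ∈ LinearMap.range ((toShift k V).app j).hom := by
    intro j v
    obtain ⟨y, rfl⟩ := hall (iota.obj j) v
    have h2 : emb0 (iota.obj j) = emb0 j ≫ piTrans.app j := FI.hom_ext fun x => x.elim0
    have h1 : (V.map (emb0 (iota.obj j))) y =
        ((toShift k V).app j) ((V.map (emb0 j)) y) := by
      rw [toShift_app, h2, V.map_comp]; rfl
    rw [h1]
    exact ⟨_, rfl⟩
  refine (Functor.isZero_iff (Dobj k V)).mpr fun j => ?_
  have hzero : ∀ w : (Dobj k V).obj j, w = 0 := by
    intro w
    obtain ⟨v, rfl⟩ := pi_app_surjective V j w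
    exact (pi_app_zero_iff V j v).mpr (hsurj j v)
  haveI : Subsingleton ((Dobj k V).obj j) :=
    subsingleton_of_forall_eq 0 hzero
  exact ModuleCat.isZero_of_subsingleton _

end DerivAux

/-- `gd(DV) = gd(V) - 1` when `gd(V) ≥ 1`, and `DV = 0` when `gd(V) ≤ 0`. -/
theorem stmt_8 (k : Type) [CommRing k] [IsNoetherianRing k] (V : FIMod k) (hV : FG V) :
    (∀ n : ℕ, 1 ≤ n → GeneratedIn V n → (∀ m, m < n → ¬ GeneratedIn V m) →
      GeneratedIn (Dobj k V) (n - 1) ∧ ¬ IsZero (Dobj k V) ∧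
        ∀ m, m < n - 1 → ¬ GeneratedIn (Dobj k V) m) ∧
    (GeneratedIn V 0 → IsZero (Dobj k V)) := by
  constructor
  · intro n hn hgen hm
    refine ⟨claim1 V n hn hgen, ?_, ?_⟩
    · intro hz
      exact hm 0 (by omega) (claim4 V hz)
    · intro m hmlt hDm
      exact hm (m + 1) (by omega) (claim3 V m hDm)
  · exact claim5 V
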